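/- If G acts transitively on a finite set V, Q is a G-invariant partition of V (a system of blocks), and the induced action of G on Q admits a fixed-point-free element of prime-power order, then G acting on V also contains a fixed-point-free element of prime-power order. -/

import Mathlib

open Pointwise

/-- If `G` acts transitively on finite `V`, `Q` is a `G`-invariant partition of `V`,
and some element of `G` induces on `Q` a fixed-point-free permutation of prime-power
order, then `G` also contains a fixed-point-free element of prime-power order on `V`. -/
theorem stmt_1 {G V : Type*} [Group G] [Fintype G] [Fintype V] [MulAction G V]
    (ht : MulAction.IsPretransitive G V)
    (Q : Set (Set V)) (hQ : Setoid.IsPartition Q)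
    (hGQ : ∀ (g : G), ∀ B ∈ Q, g • B ∈ Q)
    (hyp : ∃ (g : G) (p l : ℕ), p.Prime ∧ 1 ≤ l ∧
      (∀ B ∈ Q, g • B ≠ B) ∧
      (∀ B ∈ Q, (g ^ p ^ l) • B = B) ∧
      (∀ k : ℕ, (∀ B ∈ Q, (g ^ k) • B = B) → p ^ l ∣ k)) :
    ∃ h : G, (∀ v : V, h • v ≠ v) ∧
      ∃ p m : ℕ, p.Prime ∧ 1 ≤ m ∧ orderOf h = p ^ m := by
  obtain ⟨g, p, l, hp, hl, hfree, hfix, hdvd⟩ := hyp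
  have hn0 : orderOf g ≠ 0 := (orderOf_pos g).ne'
  have hpl : p ^ l ∣ orderOf g := by
    refine hdvd _ ?_
    intro B hB
    simp [pow_orderOf_eq_one g]
  set a := (orderOf g).factorization p with ha
  set m := orderOf g / p ^ a with hm
  have hsplit : p ^ a * m = orderOf g := Nat.ordProj_mul_ordCompl_eq_self (orderOf g) p
  have hm0 : 0 < m := Nat.ordCompl_pos p hn0
  have hla : l ≤ a := (Nat.Prime.pow_dvd_iff_le_factorization hp hn0).mp hpl
  have hcop : Nat.Coprime (p ^ l) m := (Nat.coprime_ordCompl hp hn0).pow_left l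
  refine ⟨g ^ m, ?_, p, a, hp, le_trans hl hla, ?_⟩
  · intro v hv
    obtain ⟨B, ⟨hBQ, hvB⟩, huniq⟩ := hQ.2 v
    have hBm : (g ^ m) ∈ MulAction.stabilizer G B := by
      have : (g ^ m) • B = B :=
        huniq ((g ^ m) • B) ⟨hGQ _ _ hBQ, hv ▸ Set.smul_mem_smul_set hvB⟩
      exact this
    have hBp : (g ^ (p ^ l)) ∈ MulAction.stabilizer G B := hfix B hBQ
    have key : g ∈ MulAction.stabilizer G B := by
      have h3 : g ^ ((Nat.gcd (p ^ l) m : ℤ)) ∈ MulAction.stabilizer G B := by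
        rw [Nat.gcd_eq_gcd_ab, zpow_add, zpow_mul, zpow_mul, zpow_natCast, zpow_natCast]
        exact mul_mem (zpow_mem hBp _) (zpow_mem hBm _)
      rw [hcop.gcd_eq_one] at h3
      simpa using h3
    exact hfree B hBQ key
  · rw [orderOf_pow, Nat.gcd_eq_right ⟨p ^ a, by rw [mul_comm]; exact hsplit.symm⟩,
      Nat.div_eq_of_eq_mul_left hm0 hsplit.symm]
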